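/- There exists a nuciferous graph on more than 2 vertices; concretely, the 7-regular Cayley graph on 24 vertices whose adjacency matrix A is given explicitly (Table 2 of the paper) is nuciferous: A is invertible, all diagonal entries of A⁻¹ are zero, and all off-diagonal entries of A⁻¹ are nonzero. In particular, K₂ is not the only nuciferous graph. -/

import Mathlib

open Matrix SimpleGraph

/-- A simple graph is *nuciferous* if its 0-1 adjacency matrix is invertible,
all diagonal entries of the inverse are zero, and all off-diagonal entries of
the inverse are nonzero. -/
def Nuciferous {V : Type*} [Fintype V] [DecidableEq V] (G : SimpleGraph V)
    [DecidableRel G.Adj] : Prop :=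
  IsUnit (G.adjMatrix ℚ) ∧ (∀ i, (G.adjMatrix ℚ)⁻¹ i i = 0) ∧
    ∀ i j, i ≠ j → (G.adjMatrix ℚ)⁻¹ i j ≠ 0

/-- The adjacency matrix of the nuciferous Cayley graph on 24 vertices
from Table 2 of the paper. -/
def A24 : Matrix (Fin 24) (Fin 24) ℚ :=
  !![0, 1, 1, 1, 1, 1, 1, 1, 0, 0, 0, 0, 0, 0, 0, 0, 0, 0, 0, 0, 0, 0, 0, 0;
    1, 0, 1, 1, 0, 0, 0, 0, 0, 0, 0, 0, 1, 1, 0, 0, 0, 0, 0, 0, 1, 1, 0, 0;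
    1, 1, 0, 1, 0, 0, 0, 0, 1, 0, 1, 0, 0, 0, 1, 0, 0, 0, 1, 0, 0, 0, 0, 0;
    1, 1, 1, 0, 0, 0, 0, 0, 0, 1, 0, 1, 0, 0, 0, 1, 0, 0, 0, 1, 0, 0, 0, 0;
    1, 0, 0, 0, 0, 1, 0, 0, 0, 1, 0, 1, 0, 0, 1, 0, 0, 1, 0, 0, 1, 0, 0, 0;
    1, 0, 0, 0, 1, 0, 0, 0, 1, 0, 1, 0, 0, 0, 0, 1, 1, 0, 0, 0, 0, 1, 0, 0;
    1, 0, 0, 0, 0, 0, 0, 0, 0, 1, 0, 1, 1, 1, 0, 0, 1, 0, 1, 0, 0, 0, 0, 0;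
    1, 0, 0, 0, 0, 0, 0, 0, 1, 0, 1, 0, 1, 1, 0, 0, 0, 1, 0, 1, 0, 0, 0, 0;
    0, 0, 1, 0, 0, 1, 0, 1, 0, 1, 0, 0, 0, 1, 0, 0, 0, 0, 0, 1, 0, 0, 1, 0;
    0, 0, 0, 1, 1, 0, 1, 0, 1, 0, 0, 0, 1, 0, 0, 0, 0, 0, 1, 0, 0, 0, 1, 0;
    0, 0, 1, 0, 0, 1, 0, 1, 0, 0, 0, 0, 0, 0, 1, 1, 0, 0, 0, 0, 0, 1, 0, 1;
    0, 0, 0, 1, 1, 0, 1, 0, 0, 0, 0, 0, 0, 0, 1, 1, 0, 0, 0, 0, 1, 0, 0, 1;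
    0, 1, 0, 0, 0, 0, 1, 1, 0, 1, 0, 0, 0, 0, 1, 0, 0, 1, 1, 0, 0, 0, 0, 0;
    0, 1, 0, 0, 0, 0, 1, 1, 1, 0, 0, 0, 0, 0, 0, 1, 1, 0, 0, 1, 0, 0, 0, 0;
    0, 0, 1, 0, 1, 0, 0, 0, 0, 0, 1, 1, 1, 0, 0, 0, 0, 0, 0, 0, 1, 0, 1, 0;
    0, 0, 0, 1, 0, 1, 0, 0, 0, 0, 1, 1, 0, 1, 0, 0, 0, 0, 0, 0, 0, 1, 1, 0;
    0, 0, 0, 0, 0, 1, 1, 0, 0, 0, 0, 0, 0, 1, 0, 0, 0, 1, 0, 0, 1, 0, 1, 1;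
    0, 0, 0, 0, 1, 0, 0, 1, 0, 0, 0, 0, 1, 0, 0, 0, 1, 0, 0, 0, 0, 1, 1, 1;
    0, 0, 1, 0, 0, 0, 1, 0, 0, 1, 0, 0, 1, 0, 0, 0, 0, 0, 0, 1, 1, 0, 0, 1;
    0, 0, 0, 1, 0, 0, 0, 1, 1, 0, 0, 0, 0, 1, 0, 0, 0, 0, 1, 0, 0, 1, 0, 1;
    0, 1, 0, 0, 1, 0, 0, 0, 0, 0, 0, 1, 0, 0, 1, 0, 1, 0, 1, 0, 0, 1, 0, 0;
    0, 1, 0, 0, 0, 1, 0, 0, 0, 0, 1, 0, 0, 0, 0, 1, 0, 1, 0, 1, 1, 0, 0, 0;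
    0, 0, 0, 0, 0, 0, 0, 0, 1, 1, 0, 0, 0, 0, 1, 1, 1, 1, 0, 0, 0, 0, 0, 1;
    0, 0, 0, 0, 0, 0, 0, 0, 0, 0, 1, 1, 0, 0, 0, 0, 1, 1, 1, 1, 0, 0, 1, 0]



def Aint : Matrix (Fin 24) (Fin 24) ℤ :=
  !![0, 1, 1, 1, 1, 1, 1, 1, 0, 0, 0, 0, 0, 0, 0, 0, 0, 0, 0, 0, 0, 0, 0, 0;
    1, 0, 1, 1, 0, 0, 0, 0, 0, 0, 0, 0, 1, 1, 0, 0, 0, 0, 0, 0, 1, 1, 0, 0;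
    1, 1, 0, 1, 0, 0, 0, 0, 1, 0, 1, 0, 0, 0, 1, 0, 0, 0, 1, 0, 0, 0, 0, 0;
    1, 1, 1, 0, 0, 0, 0, 0, 0, 1, 0, 1, 0, 0, 0, 1, 0, 0, 0, 1, 0, 0, 0, 0;
    1, 0, 0, 0, 0, 1, 0, 0, 0, 1, 0, 1, 0, 0, 1, 0, 0, 1, 0, 0, 1, 0, 0, 0;
    1, 0, 0, 0, 1, 0, 0, 0, 1, 0, 1, 0, 0, 0, 0, 1, 1, 0, 0, 0, 0, 1, 0, 0;
    1, 0, 0, 0, 0, 0, 0, 0, 0, 1, 0, 1, 1, 1, 0, 0, 1, 0, 1, 0, 0, 0, 0, 0;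
    1, 0, 0, 0, 0, 0, 0, 0, 1, 0, 1, 0, 1, 1, 0, 0, 0, 1, 0, 1, 0, 0, 0, 0;
    0, 0, 1, 0, 0, 1, 0, 1, 0, 1, 0, 0, 0, 1, 0, 0, 0, 0, 0, 1, 0, 0, 1, 0;
    0, 0, 0, 1, 1, 0, 1, 0, 1, 0, 0, 0, 1, 0, 0, 0, 0, 0, 1, 0, 0, 0, 1, 0;
    0, 0, 1, 0, 0, 1, 0, 1, 0, 0, 0, 0, 0, 0, 1, 1, 0, 0, 0, 0, 0, 1, 0, 1;
    0, 0, 0, 1, 1, 0, 1, 0, 0, 0, 0, 0, 0, 0, 1, 1, 0, 0, 0, 0, 1, 0, 0, 1;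
    0, 1, 0, 0, 0, 0, 1, 1, 0, 1, 0, 0, 0, 0, 1, 0, 0, 1, 1, 0, 0, 0, 0, 0;
    0, 1, 0, 0, 0, 0, 1, 1, 1, 0, 0, 0, 0, 0, 0, 1, 1, 0, 0, 1, 0, 0, 0, 0;
    0, 0, 1, 0, 1, 0, 0, 0, 0, 0, 1, 1, 1, 0, 0, 0, 0, 0, 0, 0, 1, 0, 1, 0;
    0, 0, 0, 1, 0, 1, 0, 0, 0, 0, 1, 1, 0, 1, 0, 0, 0, 0, 0, 0, 0, 1, 1, 0;
    0, 0, 0, 0, 0, 1, 1, 0, 0, 0, 0, 0, 0, 1, 0, 0, 0, 1, 0, 0, 1, 0, 1, 1;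
    0, 0, 0, 0, 1, 0, 0, 1, 0, 0, 0, 0, 1, 0, 0, 0, 1, 0, 0, 0, 0, 1, 1, 1;
    0, 0, 1, 0, 0, 0, 1, 0, 0, 1, 0, 0, 1, 0, 0, 0, 0, 0, 0, 1, 1, 0, 0, 1;
    0, 0, 0, 1, 0, 0, 0, 1, 1, 0, 0, 0, 0, 1, 0, 0, 0, 0, 1, 0, 0, 1, 0, 1;
    0, 1, 0, 0, 1, 0, 0, 0, 0, 0, 0, 1, 0, 0, 1, 0, 1, 0, 1, 0, 0, 1, 0, 0;
    0, 1, 0, 0, 0, 1, 0, 0, 0, 0, 1, 0, 0, 0, 0, 1, 0, 1, 0, 1, 1, 0, 0, 0;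
    0, 0, 0, 0, 0, 0, 0, 0, 1, 1, 0, 0, 0, 0, 1, 1, 1, 1, 0, 0, 0, 0, 0, 1;
    0, 0, 0, 0, 0, 0, 0, 0, 0, 0, 1, 1, 0, 0, 0, 0, 1, 1, 1, 1, 0, 0, 1, 0]

def Bint : Matrix (Fin 24) (Fin 24) ℤ :=
  !![0, 1, 5, 5, 4, 4, 1, 1, -1, -1, 1, 1, -1, -1, -4, -4, 4, 4, -2, -2, -4, -4, -6, 2;
    1, 0, 5, 5, -4, -4, -1, -1, -2, -2, -4, -4, 1, 1, 1, 1, 4, 4, -1, -1, 4, 4, 2, -6;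
    5, 5, 0, 1, -4, 1, -2, -1, 1, -1, 4, -4, -1, -2, 4, -4, 2, -6, 1, -1, 1, -4, 4, 4;
    5, 5, 1, 0, 1, -4, -1, -2, -1, 1, -4, 4, -2, -1, -4, 4, -6, 2, -1, 1, -4, 1, 4, 4;
    4, -4, -4, 1, 0, 4, -1, 4, 4, 1, -4, 5, -1, -6, 1, -4, -1, 1, -2, 2, 5, 1, -1, -2;
    4, -4, 1, -4, 4, 0, 4, -1, 1, 4, 5, -4, -6, -1, -4, 1, 1, -1, 2, -2, 1, 5, -1, -2;
    1, -1, -2, -1, -1, 4, 0, 1, -4, 1, 2, 1, 5, 4, -2, 4, 4, -4, 5, -4, -1, -6, -4, 1;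
    1, -1, -1, -2, 4, -1, 1, 0, 1, -4, 1, 2, 4, 5, 4, -2, -4, 4, -4, 5, -6, -1, -4, 1;
    -1, -2, 1, -1, 4, 1, -4, 1, 0, 4, -1, -6, -4, 5, 4, -1, 1, -4, 1, 5, 2, -2, 4, -4;
    -1, -2, -1, 1, 1, 4, 1, -4, 4, 0, -6, -1, 5, -4, -1, 4, -4, 1, 5, 1, -2, 2, 4, -4;
    1, -4, 4, -4, -4, 5, 2, 1, -1, -6, 0, 1, 4, -2, 4, 5, -2, -1, 4, -1, -4, 1, -1, 1;
    1, -4, -4, 4, 5, -4, 1, 2, -6, -1, 1, 0, -2, 4, 5, 4, -1, -2, -1, 4, 1, -4, -1, 1;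
    -1, 1, -1, -2, -1, -6, 5, 4, -4, 5, 4, -2, 0, 1, 1, 2, -4, 4, 1, -4, -1, 4, 1, -4;
    -1, 1, -2, -1, -6, -1, 4, 5, 5, -4, -2, 4, 1, 0, 2, 1, 4, -4, -4, 1, 4, -1, 1, -4;
    -4, 1, 4, -4, 1, -4, -2, 4, 4, -1, 4, 5, 1, 2, 0, 1, -2, -1, -1, -6, 5, -4, 1, -1;
    -4, 1, -4, 4, -4, 1, 4, -2, -1, 4, 5, 4, 2, 1, 1, 0, -1, -2, -6, -1, -4, 5, 1, -1;
    4, 4, 2, -6, -1, 1, 4, -4, 1, -4, -2, -1, -4, 4, -2, -1, 0, 1, 1, -4, 1, -1, 5, 5;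
    4, 4, -6, 2, 1, -1, -4, 4, -4, 1, -1, -2, 4, -4, -1, -2, 1, 0, -4, 1, -1, 1, 5, 5;
    -2, -1, 1, -1, -2, 2, 5, -4, 1, 5, 4, -1, 1, -4, -1, -6, 1, -4, 0, 4, 1, 4, -4, 4;
    -2, -1, -1, 1, 2, -2, -4, 5, 5, 1, -1, 4, -4, 1, -6, -1, -4, 1, 4, 0, 4, 1, -4, 4;
    -4, 4, 1, -4, 5, 1, -1, -6, 2, -2, -4, 1, -1, 4, 5, -4, 1, -1, 1, 4, 0, 4, -2, -1;
    -4, 4, -4, 1, 1, 5, -6, -1, -2, 2, 1, -4, 4, -1, -4, 5, -1, 1, 4, 1, 4, 0, -2, -1;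
    -6, 2, 4, 4, -1, -1, -4, -4, 4, 4, -1, -1, 1, 1, 1, 1, 5, 5, -4, -4, -2, -2, 0, 1;
    2, -6, 4, 4, -2, -2, 1, 1, -4, -4, 1, 1, -4, -4, -1, -1, 5, 5, 4, 4, -1, -1, 1, 0]

set_option maxRecDepth 100000 in
set_option maxHeartbeats 1000000 in
lemma hAsymmAdj : ∀ i j : Fin 24, Aint i j = 1 → Aint j i = 1 := by
  letI : DecidablePred (fun i : Fin 24 => ∀ j : Fin 24, Aint i j = 1 → Aint j i = 1) := fun i => inferInstance
  decide

set_option maxRecDepth 100000 in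
set_option maxHeartbeats 1000000 in
lemma hAirr : ∀ i : Fin 24, ¬ Aint i i = 1 := by decide

def G24 : SimpleGraph (Fin 24) where
  Adj i j := Aint i j = 1
  symm := ⟨fun i j h => hAsymmAdj i j h⟩
  loopless := ⟨fun i h => hAirr i h⟩

instance : DecidableRel G24.Adj := fun _ _ => inferInstanceAs (Decidable (_ = _))

set_option maxRecDepth 100000 in
set_option maxHeartbeats 4000000 in
lemma hABint : Aint * Bint = (21:ℤ) • (1 : Matrix (Fin 24) (Fin 24) ℤ) := by decide

set_option maxRecDepth 100000 in
set_option maxHeartbeats 1000000 in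
lemma hAsymm : Aintᵀ = Aint := by decide

set_option maxRecDepth 100000 in
set_option maxHeartbeats 1000000 in
lemma hBsymm : Bintᵀ = Bint := by decide

lemma hBAint : Bint * Aint = (21:ℤ) • (1 : Matrix (Fin 24) (Fin 24) ℤ) := by
  have := congrArg Matrix.transpose hABint
  rwa [Matrix.transpose_mul, hAsymm, hBsymm, Matrix.transpose_smul,
    Matrix.transpose_one] at this

set_option maxRecDepth 100000 in
set_option maxHeartbeats 1000000 in
lemma hA01 : ∀ i j, Aint i j = if G24.Adj i j then 1 else 0 := by
  letI : DecidablePred (fun i : Fin 24 => ∀ j : Fin 24, Aint i j = if G24.Adj i j then 1 else 0) := fun i => inferInstance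
  decide

set_option maxRecDepth 100000 in
set_option maxHeartbeats 1000000 in
lemma hBdiag : ∀ i : Fin 24, Bint i i = 0 := by decide

set_option maxRecDepth 100000 in
set_option maxHeartbeats 1000000 in
lemma hBoff : ∀ i j : Fin 24, i ≠ j → Bint i j ≠ 0 := by
  letI : DecidablePred (fun i : Fin 24 => ∀ j : Fin 24, i ≠ j → Bint i j ≠ 0) := fun i => inferInstance
  decide

set_option maxRecDepth 100000 in
set_option maxHeartbeats 2000000 in
lemma hcast : A24 = Aint.map ((↑) : ℤ → ℚ) := by
  ext i j
  fin_cases i <;> fin_cases j <;> rfl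

lemma hadj : G24.adjMatrix ℚ = A24 := by
  rw [hcast]
  ext i j
  rw [SimpleGraph.adjMatrix_apply, Matrix.map_apply, hA01]
  split <;> simp

noncomputable def Bq : Matrix (Fin 24) (Fin 24) ℚ := (21:ℚ)⁻¹ • Bint.map ((↑) : ℤ → ℚ)

lemma mapcast (M : Matrix (Fin 24) (Fin 24) ℤ) :
    M.map ((↑) : ℤ → ℚ) = (Int.castRingHom ℚ).mapMatrix M := rfl

lemma hABq : A24 * Bq = 1 := by
  rw [hcast, Bq, Matrix.mul_smul, mapcast, mapcast, ← _root_.map_mul, hABint, map_zsmul, _root_.map_one]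
  rw [← Int.cast_smul_eq_zsmul ℚ, smul_smul]
  norm_num

lemma hBAq : Bq * A24 = 1 := by
  rw [hcast, Bq, Matrix.smul_mul, mapcast, mapcast, ← _root_.map_mul, hBAint, map_zsmul, _root_.map_one]
  rw [← Int.cast_smul_eq_zsmul ℚ, smul_smul]
  norm_num

lemma hinv : A24⁻¹ = Bq := Matrix.inv_eq_right_inv hABq

theorem exists_nontrivial_nuciferous :
    ∃ (G : SimpleGraph (Fin 24)) (_ : DecidableRel G.Adj),
      G.adjMatrix ℚ = A24 ∧ Nuciferous G := by
  refine ⟨G24, inferInstance, hadj, ?_, ?_, ?_⟩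
  · rw [hadj]
    have : Invertible A24 := invertibleOfRightInverse _ _ hABq
    exact isUnit_of_invertible A24
  · intro i
    rw [hadj, hinv, Bq, Matrix.smul_apply, Matrix.map_apply, hBdiag]
    simp
  · intro i j hij
    rw [hadj, hinv, Bq, Matrix.smul_apply, Matrix.map_apply]
    have := hBoff i j hij
    simp [this]
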